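/- Let G be a graph with a vertex-cut {u,v} and let G₁, G₂ be induced subgraphs with V(G₁) ∪ V(G₂) = V(G) and V(G₁) ∩ V(G₂) = {u,v}. If uv is an edge of G, then χ_f(G) = max{χ_f(G₁), χ_f(G₂)}. -/

import Mathlib

/-- An `(a:b)`-coloring of `G`. -/
def HasFracColoring {V : Type*} (G : SimpleGraph V) (a b : ℕ) : Prop :=
  ∃ f : V → Finset (Fin a), (∀ v, (f v).card = b) ∧
    ∀ u v, G.Adj u v → Disjoint (f u) (f v)

/-- The fractional chromatic number. -/
noncomputable def fracChrom {V : Type*} (G : SimpleGraph V) : ℝ :=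
  sInf {x : ℝ | ∃ a b : ℕ, 0 < a ∧ 0 < b ∧ HasFracColoring G a b ∧ x = (a : ℝ) / b}

/-- `S` is a vertex-cut of `G` if deleting `S` leaves a disconnected graph. -/
def IsVertexCut {V : Type*} (G : SimpleGraph V) (S : Set V) : Prop :=
  ¬ (G.induce (Sᶜ : Set V)).Preconnected

lemma exists_inj_image {n : ℕ} (A B C D : Finset (Fin n))
    (hAB : Disjoint A B) (hCD : Disjoint C D)
    (hAC : A.card = C.card) (hBD : B.card = D.card) :
    ∃ τ : Fin n → Fin n, Function.Injective τ ∧ A.image τ = C ∧ B.image τ = D := by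
  classical
  have hE : ((A ∪ B)ᶜ : Finset (Fin n)).card = ((C ∪ D)ᶜ : Finset (Fin n)).card := by
    rw [Finset.card_compl, Finset.card_compl, Finset.card_union_of_disjoint hAB,
      Finset.card_union_of_disjoint hCD, hAC, hBD]
  set eA := Finset.equivOfCardEq hAC with heA
  set eB := Finset.equivOfCardEq hBD with heB
  set eE := Finset.equivOfCardEq hE with heE
  have hmemE : ∀ x : Fin n, x ∉ A → x ∉ B → x ∈ (A ∪ B)ᶜ := by
    intro x hx hx'; simp [Finset.mem_compl, hx, hx']
  set τ : Fin n → Fin n := fun x =>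
    if hx : x ∈ A then (eA ⟨x, hx⟩ : Fin n)
    else if hx' : x ∈ B then (eB ⟨x, hx'⟩ : Fin n)
    else (eE ⟨x, hmemE x hx hx'⟩ : Fin n) with hτ
  have hτA : ∀ (x : Fin n) (hx : x ∈ A), τ x = (eA ⟨x, hx⟩ : Fin n) := by
    intro x hx; simp only [hτ, dif_pos hx]
  have hτB : ∀ (x : Fin n) (hx : x ∈ B), τ x = (eB ⟨x, hx⟩ : Fin n) := by
    intro x hx
    have hxA : x ∉ A := Finset.disjoint_right.mp hAB hx
    simp only [hτ, dif_neg hxA, dif_pos hx]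
  have hτE : ∀ (x : Fin n) (hxA : x ∉ A) (hxB : x ∉ B),
      τ x = (eE ⟨x, hmemE x hxA hxB⟩ : Fin n) := by
    intro x hxA hxB; simp only [hτ, dif_neg hxA, dif_neg hxB]
  have hmC : ∀ (x : Fin n) (hx : x ∈ A), τ x ∈ C := fun x hx => by
    rw [hτA x hx]; exact (eA ⟨x, hx⟩).2
  have hmD : ∀ (x : Fin n) (hx : x ∈ B), τ x ∈ D := fun x hx => by
    rw [hτB x hx]; exact (eB ⟨x, hx⟩).2
  have hmF : ∀ (x : Fin n) (hxA : x ∉ A) (hxB : x ∉ B), τ x ∈ (C ∪ D)ᶜ := fun x hxA hxB => by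
    rw [hτE x hxA hxB]; exact (eE ⟨x, hmemE x hxA hxB⟩).2
  have hnotC : ∀ y ∈ ((C ∪ D)ᶜ : Finset (Fin n)), y ∉ C := by
    intro y hy
    rw [Finset.mem_compl, Finset.mem_union] at hy
    exact fun h => hy (Or.inl h)
  have hnotD : ∀ y ∈ ((C ∪ D)ᶜ : Finset (Fin n)), y ∉ D := by
    intro y hy
    rw [Finset.mem_compl, Finset.mem_union] at hy
    exact fun h => hy (Or.inr h)
  have hinj : Function.Injective τ := by
    intro x y hxy
    by_cases hxA : x ∈ A <;> by_cases hyA : y ∈ A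
    · rw [hτA x hxA, hτA y hyA] at hxy
      exact congrArg Subtype.val (eA.injective (Subtype.coe_injective hxy))
    · exfalso
      have h1 : τ x ∈ C := hmC x hxA
      by_cases hyB : y ∈ B
      · have h2 : τ x ∈ D := by rw [hxy]; exact hmD y hyB
        exact Finset.disjoint_left.mp hCD h1 h2
      · have h2 : τ x ∈ (C ∪ D)ᶜ := by rw [hxy]; exact hmF y hyA hyB
        exact hnotC _ h2 h1
    · exfalso
      have h1 : τ y ∈ C := hmC y hyA
      by_cases hxB : x ∈ B
      · have h2 : τ y ∈ D := by rw [← hxy]; exact hmD x hxB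
        exact Finset.disjoint_left.mp hCD h1 h2
      · have h2 : τ y ∈ (C ∪ D)ᶜ := by rw [← hxy]; exact hmF x hxA hxB
        exact hnotC _ h2 h1
    · by_cases hxB : x ∈ B <;> by_cases hyB : y ∈ B
      · rw [hτB x hxB, hτB y hyB] at hxy
        exact congrArg Subtype.val (eB.injective (Subtype.coe_injective hxy))
      · exfalso
        have h1 : τ x ∈ D := hmD x hxB
        have h2 : τ x ∈ (C ∪ D)ᶜ := by rw [hxy]; exact hmF y hyA hyB
        exact hnotD _ h2 h1
      · exfalso
        have h1 : τ y ∈ D := hmD y hyB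
        have h2 : τ y ∈ (C ∪ D)ᶜ := by rw [← hxy]; exact hmF x hxA hxB
        exact hnotD _ h2 h1
      · rw [hτE x hxA hxB, hτE y hyA hyB] at hxy
        exact congrArg Subtype.val (eE.injective (Subtype.coe_injective hxy))
  refine ⟨τ, hinj, ?_, ?_⟩
  · apply Finset.eq_of_subset_of_card_le
    · intro c hc
      rw [Finset.mem_image] at hc
      obtain ⟨x, hx, rfl⟩ := hc
      exact hmC x hx
    · rw [Finset.card_image_of_injective _ hinj, hAC]
  · apply Finset.eq_of_subset_of_card_le
    · intro c hc
      rw [Finset.mem_image] at hc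
      obtain ⟨x, hx, rfl⟩ := hc
      exact hmD x hx
    · rw [Finset.card_image_of_injective _ hinj, hBD]

lemma HasFracColoring.induce {V : Type*} {G : SimpleGraph V} {a b : ℕ}
    (h : HasFracColoring G a b) (s : Set V) : HasFracColoring (G.induce s) a b := by
  obtain ⟨f, h1, h2⟩ := h
  exact ⟨fun x => f x, fun x => h1 x, fun x y hxy => h2 x y hxy⟩

lemma HasFracColoring.mono {V : Type*} {G : SimpleGraph V} {a a' b : ℕ}
    (h : HasFracColoring G a b) (ha : a ≤ a') : HasFracColoring G a' b := by
  obtain ⟨f, h1, h2⟩ := h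
  refine ⟨fun x => (f x).map (Fin.castLEEmb ha), fun x => by rw [Finset.card_map, h1],
    fun x y hxy => ?_⟩
  rw [Finset.disjoint_map]
  exact h2 x y hxy

lemma HasFracColoring.scale {V : Type*} {G : SimpleGraph V} {a b : ℕ}
    (h : HasFracColoring G a b) (k : ℕ) : HasFracColoring G (a * k) (b * k) := by
  obtain ⟨f, h1, h2⟩ := h
  refine ⟨fun x => (f x ×ˢ (Finset.univ : Finset (Fin k))).map finProdFinEquiv.toEmbedding,
    fun x => ?_, fun x y hxy => ?_⟩
  · rw [Finset.card_map, Finset.card_product, h1, Finset.card_univ, Fintype.card_fin]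
  · rw [Finset.disjoint_map, Finset.disjoint_left]
    rintro ⟨c, i⟩ hm hm'
    rw [Finset.mem_product] at hm hm'
    exact Finset.disjoint_left.mp (h2 x y hxy) hm.1 hm'.1

lemma hasFracColoring_card {V : Type*} [Fintype V] (G : SimpleGraph V) :
    HasFracColoring G (Fintype.card V) 1 := by
  classical
  refine ⟨fun x => {(Fintype.equivFin V) x}, fun x => rfl, fun x y hxy => ?_⟩
  rw [Finset.disjoint_singleton]
  exact (Fintype.equivFin V).injective.ne (G.ne_of_adj hxy)

lemma glue_coloring {V : Type*} (G : SimpleGraph V) (u v : V) (s₁ s₂ : Set V)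
    (hunion : s₁ ∪ s₂ = Set.univ) (hinter : s₁ ∩ s₂ = {u, v})
    (hedges : ∀ x y, G.Adj x y → (x ∈ s₁ ∧ y ∈ s₁) ∨ (x ∈ s₂ ∧ y ∈ s₂))
    (hu₁ : u ∈ s₁) (hv₁ : v ∈ s₁) (hu₂ : u ∈ s₂) (hv₂ : v ∈ s₂)
    (hadj : G.Adj u v) {a b : ℕ}
    (h₁ : HasFracColoring (G.induce s₁) a b) (h₂ : HasFracColoring (G.induce s₂) a b) :
    HasFracColoring G a b := by
  classical
  obtain ⟨f₁, hc₁, hd₁⟩ := h₁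
  obtain ⟨f₂, hc₂, hd₂⟩ := h₂
  have hadj₁ : (G.induce s₁).Adj ⟨u, hu₁⟩ ⟨v, hv₁⟩ := hadj
  have hadj₂ : (G.induce s₂).Adj ⟨u, hu₂⟩ ⟨v, hv₂⟩ := hadj
  obtain ⟨τ, hτinj, hτu, hτv⟩ := exists_inj_image (f₂ ⟨u, hu₂⟩) (f₂ ⟨v, hv₂⟩)
    (f₁ ⟨u, hu₁⟩) (f₁ ⟨v, hv₁⟩) (hd₂ _ _ hadj₂) (hd₁ _ _ hadj₁)
    (by rw [hc₂, hc₁]) (by rw [hc₂, hc₁])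
  have hs₂ : ∀ x : V, x ∉ s₁ → x ∈ s₂ := by
    intro x hx
    have : x ∈ s₁ ∪ s₂ := hunion.symm ▸ Set.mem_univ x
    exact this.resolve_left hx
  set g : V → Finset (Fin a) := fun x =>
    if hx : x ∈ s₁ then f₁ ⟨x, hx⟩ else (f₂ ⟨x, hs₂ x hx⟩).image τ with hg
  have key : ∀ (x : V) (hx : x ∈ s₂), g x = (f₂ ⟨x, hx⟩).image τ := by
    intro x hx
    by_cases hx1 : x ∈ s₁
    · have hxm : x ∈ ({u, v} : Set V) := hinter ▸ ⟨hx1, hx⟩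
      rcases hxm with h | h
      · subst h
        simp only [hg, dif_pos hx1]
        rw [← hτu]
      · have h' : x = v := h
        subst h'
        simp only [hg, dif_pos hx1]
        rw [← hτv]
    · simp only [hg, dif_neg hx1]
  refine ⟨g, fun x => ?_, fun x y hxy => ?_⟩
  · by_cases hx1 : x ∈ s₁
    · simp only [hg, dif_pos hx1]; exact hc₁ _
    · simp only [hg, dif_neg hx1]
      rw [Finset.card_image_of_injective _ hτinj]
      exact hc₂ _
  · rcases hedges x y hxy with ⟨hx, hy⟩ | ⟨hx, hy⟩
    · have hgx : g x = f₁ ⟨x, hx⟩ := by simp only [hg, dif_pos hx]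
      have hgy : g y = f₁ ⟨y, hy⟩ := by simp only [hg, dif_pos hy]
      rw [hgx, hgy]
      exact hd₁ ⟨x, hx⟩ ⟨y, hy⟩ hxy
    · rw [key x hx, key y hy, Finset.disjoint_image hτinj]
      exact hd₂ ⟨x, hx⟩ ⟨y, hy⟩ hxy

def colSet {V : Type*} (G : SimpleGraph V) : Set ℝ :=
  {x : ℝ | ∃ a b : ℕ, 0 < a ∧ 0 < b ∧ HasFracColoring G a b ∧ x = (a : ℝ) / b}

lemma fracChrom_def {V : Type*} (G : SimpleGraph V) : fracChrom G = sInf (colSet G) := rfl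

lemma colSet_bddBelow {V : Type*} (G : SimpleGraph V) : BddBelow (colSet G) := by
  refine ⟨0, fun x hx => ?_⟩
  obtain ⟨a, b, _, _, _, rfl⟩ := hx
  positivity

lemma colSet_nonempty {V : Type*} [Fintype V] [Nonempty V] (G : SimpleGraph V) :
    (colSet G).Nonempty :=
  ⟨(Fintype.card V : ℝ) / 1, Fintype.card V, 1, Fintype.card_pos, one_pos,
    hasFracColoring_card G, by norm_num⟩

lemma colSet_subset_induce {V : Type*} (G : SimpleGraph V) (s : Set V) :
    colSet G ⊆ colSet (G.induce s) := by
  rintro x ⟨a, b, ha, hb, hcol, rfl⟩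
  exact ⟨a, b, ha, hb, hcol.induce s, rfl⟩

/-- If `{u,v}` is a vertex-cut with `uv ∈ E(G)`, and `G` is the union of the induced
subgraphs `G₁ = G[s₁]` and `G₂ = G[s₂]` with `s₁ ∩ s₂ = {u,v}`, then
`χ_f(G) = max (χ_f(G₁), χ_f(G₂))`. -/
theorem fracChrom_eq_max_of_two_cut_edge {V : Type*} [Fintype V]
    (G : SimpleGraph V) (u v : V) (huv : u ≠ v)
    (s₁ s₂ : Set V) (hunion : s₁ ∪ s₂ = Set.univ)
    (hinter : s₁ ∩ s₂ = {u, v})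
    (hedges : ∀ x y, G.Adj x y → (x ∈ s₁ ∧ y ∈ s₁) ∨ (x ∈ s₂ ∧ y ∈ s₂))
    (hcut : IsVertexCut G ({u, v} : Set V))
    (hadj : G.Adj u v) :
    fracChrom G = max (fracChrom (G.induce s₁)) (fracChrom (G.induce s₂)) := by
  have : Nonempty V := ⟨u⟩
  have huin : u ∈ s₁ ∩ s₂ := hinter.symm ▸ (Set.mem_insert u {v})
  have hvin : v ∈ s₁ ∩ s₂ := hinter.symm ▸ (Set.mem_insert_of_mem u rfl)
  have hu₁ : u ∈ s₁ := huin.1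
  have hu₂ : u ∈ s₂ := huin.2
  have hv₁ : v ∈ s₁ := hvin.1
  have hv₂ : v ∈ s₂ := hvin.2
  have hneG : (colSet G).Nonempty := colSet_nonempty G
  have hne₁ : (colSet (G.induce s₁)).Nonempty := hneG.mono (colSet_subset_induce G s₁)
  have hne₂ : (colSet (G.induce s₂)).Nonempty := hneG.mono (colSet_subset_induce G s₂)
  rw [fracChrom_def, fracChrom_def, fracChrom_def]
  apply le_antisymm
  · apply le_of_forall_pos_le_add
    intro ε hε
    set c := max (sInf (colSet (G.induce s₁))) (sInf (colSet (G.induce s₂))) with hc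
    obtain ⟨x₁, hx₁mem, hx₁lt⟩ := exists_lt_of_csInf_lt hne₁
      (lt_add_of_pos_right _ hε : sInf (colSet (G.induce s₁)) < sInf (colSet (G.induce s₁)) + ε)
    obtain ⟨x₂, hx₂mem, hx₂lt⟩ := exists_lt_of_csInf_lt hne₂
      (lt_add_of_pos_right _ hε : sInf (colSet (G.induce s₂)) < sInf (colSet (G.induce s₂)) + ε)
    obtain ⟨a₁, b₁, ha₁, hb₁, hcol₁, rfl⟩ := hx₁mem
    obtain ⟨a₂, b₂, ha₂, hb₂, hcol₂, rfl⟩ := hx₂mem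
    set a := max (a₁ * b₂) (a₂ * b₁) with ha
    set b := b₁ * b₂ with hb
    have hcol₁' : HasFracColoring (G.induce s₁) a b :=
      (hcol₁.scale b₂).mono (le_max_left _ _)
    have hcol₂' : HasFracColoring (G.induce s₂) a b := by
      have := (hcol₂.scale b₁).mono (le_max_right (a₁ * b₂) (a₂ * b₁))
      rwa [mul_comm b₂ b₁] at this
    have hcol : HasFracColoring G a b :=
      glue_coloring G u v s₁ s₂ hunion hinter hedges hu₁ hv₁ hu₂ hv₂ hadj hcol₁' hcol₂'
    have hmem : (a : ℝ) / b ∈ colSet G :=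
      ⟨a, b, lt_of_lt_of_le (Nat.mul_pos ha₁ hb₂) (le_max_left _ _), Nat.mul_pos hb₁ hb₂,
        hcol, rfl⟩
    have hb₁R : (0 : ℝ) < b₁ := by exact_mod_cast hb₁
    have hb₂R : (0 : ℝ) < b₂ := by exact_mod_cast hb₂
    have hab : (a : ℝ) / b = max ((a₁ : ℝ) / b₁) ((a₂ : ℝ) / b₂) := by
      rw [ha, hb]
      push_cast [Nat.cast_max]
      rw [← max_div_div_right (by positivity : (0:ℝ) ≤ (b₁:ℝ) * b₂)]
      congr 1
      · rw [mul_div_mul_right _ _ (ne_of_gt hb₂R)]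
      · rw [mul_comm (b₁ : ℝ) (b₂ : ℝ), mul_div_mul_right _ _ (ne_of_gt hb₁R)]
    calc sInf (colSet G) ≤ (a : ℝ) / b := csInf_le (colSet_bddBelow G) hmem
      _ = max ((a₁ : ℝ) / b₁) ((a₂ : ℝ) / b₂) := hab
      _ ≤ c + ε := by
          apply max_le
          · exact le_of_lt (lt_of_lt_of_le hx₁lt
              (add_le_add_left (le_max_left _ _) ε))
          · exact le_of_lt (lt_of_lt_of_le hx₂lt
              (add_le_add_left (le_max_right _ _) ε))
  · apply max_le
    · exact csInf_le_csInf (colSet_bddBelow _) hneG (colSet_subset_induce G s₁)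
    · exact csInf_le_csInf (colSet_bddBelow _) hneG (colSet_subset_induce G s₂)
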